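/- For all n ≥ 1, A(2,n,1) = (n-1)!·σ₁(n): the number of pairs of commuting permutations of {1,...,n} whose generated subgroup acts transitively on {1,...,n} equals (n-1)! times the sum of divisors of n. -/

import Mathlib

open Equiv Function

namespace Stmt13

/-! ### Reduction modulo the lattice generated by (a, b0) and (0, d) -/

section Red

def red (a d b0 : ℤ) (v : ℤ × ℤ) : ℤ × ℤ :=
  (v.1 % a, (v.2 - v.1 / a * b0) % d)

variable {a d b0 : ℤ}

lemma red_eq_self (ha : 0 < a) (hd : 0 < d) {v : ℤ × ℤ}
    (h1 : 0 ≤ v.1) (h1' : v.1 < a) (h2 : 0 ≤ v.2) (h2' : v.2 < d) :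
    red a d b0 v = v := by
  have e1 : v.1 % a = v.1 := Int.emod_eq_of_lt h1 h1'
  have e2 : v.1 / a = 0 := Int.ediv_eq_zero_of_lt h1 h1'
  simp [red, e1, e2, Int.emod_eq_of_lt h2 h2']

lemma red_zero : red a d b0 0 = 0 := by
  simp [red]

lemma red_eq_red_iff (ha : 0 < a) {v w : ℤ × ℤ} :
    red a d b0 v = red a d b0 w ↔
      a ∣ v.1 - w.1 ∧ d ∣ (v.2 - w.2) - (v.1 - w.1) / a * b0 := by
  constructor
  · rintro h
    rw [red, red, Prod.ext_iff] at h
    obtain ⟨h1, h2⟩ := h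
    have hdvd : a ∣ v.1 - w.1 := by
      have := Int.emod_emod_of_dvd
      rw [Int.emod_eq_emod_iff_emod_sub_eq_zero] at h1
      exact Int.dvd_of_emod_eq_zero h1
    refine ⟨hdvd, ?_⟩
    obtain ⟨k, hk⟩ := hdvd
    have hv1 : v.1 = w.1 + a * k := by linarith
    have hdivs : v.1 / a = w.1 / a + k := by
      rw [hv1, mul_comm a k, Int.add_mul_ediv_right _ _ (ne_of_gt ha)]
    have hka : (v.1 - w.1) / a = k := by
      rw [hk, Int.mul_ediv_cancel_left _ (ne_of_gt ha)]
    rw [Int.emod_eq_emod_iff_emod_sub_eq_zero] at h2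
    have := Int.dvd_of_emod_eq_zero h2
    rw [hka]
    convert this using 1
    rw [hdivs]; ring
  · rintro ⟨h1, h2⟩
    obtain ⟨k, hk⟩ := h1
    have hv1 : v.1 = w.1 + a * k := by linarith
    have hdivs : v.1 / a = w.1 / a + k := by
      rw [hv1, mul_comm a k, Int.add_mul_ediv_right _ _ (ne_of_gt ha)]
    have hka : (v.1 - w.1) / a = k := by
      rw [hk, Int.mul_ediv_cancel_left _ (ne_of_gt ha)]
    rw [hka] at h2
    rw [red, red, Prod.ext_iff]
    constructor
    · rw [Int.emod_eq_emod_iff_emod_sub_eq_zero]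
      exact Int.emod_eq_zero_of_dvd ⟨k, hk⟩
    · rw [Int.emod_eq_emod_iff_emod_sub_eq_zero]
      apply Int.emod_eq_zero_of_dvd
      convert h2 using 1
      rw [hdivs]; ring

lemma red_add (ha : 0 < a) {v w : ℤ × ℤ} (h : red a d b0 v = red a d b0 w) (u : ℤ × ℤ) :
    red a d b0 (v + u) = red a d b0 (w + u) := by
  rw [red_eq_red_iff ha] at h ⊢
  have e1 : (v + u).1 - (w + u).1 = v.1 - w.1 := by simp
  have e2 : (v + u).2 - (w + u).2 = v.2 - w.2 := by simp
  rw [e1, e2]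
  exact h



end Red

/-! ### The set `SS` of periodic colorings -/

variable (n : ℕ) [NeZero n]

def SS : Type :=
  {s : ℤ × ℤ → Fin n // s 0 = 0 ∧ Surjective s ∧
    ∀ v w : ℤ × ℤ, s v = s w → ∀ u, s (v + u) = s (w + u)}

variable {n}

namespace SS

variable (s : SS n)

lemma shift {v w : ℤ × ℤ} (h : s.1 v = s.1 w) (u : ℤ × ℤ) : s.1 (v + u) = s.1 (w + u) :=
  s.2.2.2 v w h u

/-- The period lattice of `s`. -/
def lat : AddSubgroup (ℤ × ℤ) where
  carrier := {v | s.1 v = 0}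
  zero_mem' := s.2.1
  add_mem' := by
    intro u v hu hv
    simp only [Set.mem_setOf_eq] at hu hv ⊢
    have : s.1 (u + v) = s.1 (0 + v) := s.shift (by rw [hu, s.2.1]) v
    rw [zero_add] at this
    rw [this, hv]
  neg_mem' := by
    intro u hu
    simp only [Set.mem_setOf_eq] at hu ⊢
    have : s.1 (u + -u) = s.1 (0 + -u) := s.shift (by rw [hu, s.2.1]) (-u)
    rw [zero_add, add_neg_cancel, s.2.1] at this
    exact this.symm

lemma mem_lat {v : ℤ × ℤ} : v ∈ s.lat ↔ s.1 v = 0 := Iff.rfl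

lemma eq_iff_sub_mem {v w : ℤ × ℤ} : s.1 v = s.1 w ↔ v - w ∈ s.lat := by
  constructor
  · intro h
    have := s.shift h (-w)
    simpa [s.2.1, mem_lat, sub_eq_add_neg] using this
  · intro h
    have : s.1 (v - w) = s.1 0 := by rw [s.2.1]; exact h
    have := s.shift this w
    simpa using this

end SS

/-! ### Cyclic subgroups of ℤ -/

lemma int_subgroup (H : AddSubgroup ℤ) (hne : ∃ x : ℤ, x ∈ H ∧ x ≠ 0) :
    ∃ g : ℕ, 0 < g ∧ ∀ x : ℤ, x ∈ H ↔ (g : ℤ) ∣ x := by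
  obtain ⟨g, rfl⟩ := Int.subgroup_cyclic H
  have hmem : ∀ x : ℤ, x ∈ AddSubgroup.closure {g} ↔ g ∣ x := by
    intro x
    rw [AddSubgroup.mem_closure_singleton]
    constructor
    · rintro ⟨k, rfl⟩
      exact ⟨k, by simp [zsmul_eq_mul, mul_comm]⟩
    · rintro ⟨c, rfl⟩
      exact ⟨c, by simp [zsmul_eq_mul, mul_comm]⟩
  obtain ⟨x, hx, hx0⟩ := hne
  have hg : g ≠ 0 := by
    rintro rfl
    rw [hmem] at hx
    simp at hx
    exact hx0 hx
  refine ⟨g.natAbs, by positivity, fun x => ?_⟩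
  rw [hmem, Int.natAbs_dvd]

namespace SS

variable (s : SS n)

lemma exists_data : ∃ (a d : ℕ) (b0 : ℤ), 0 < a ∧ 0 < d ∧ 0 ≤ b0 ∧ b0 < (d : ℤ) ∧
    ∀ v : ℤ × ℤ, v ∈ s.lat ↔ (a : ℤ) ∣ v.1 ∧ (d : ℤ) ∣ v.2 - v.1 / a * b0 := by
  -- the subgroup D of vertical periods
  obtain ⟨d, hd, hD⟩ : ∃ g : ℕ, 0 < g ∧ ∀ y : ℤ, (0, y) ∈ s.lat ↔ (g : ℤ) ∣ y := by
    refine int_subgroup (s.lat.comap (AddMonoidHom.inr ℤ ℤ)) ?_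
    obtain ⟨x, y, hxy, hf⟩ :=
      Finite.exists_ne_map_eq_of_infinite (fun y : ℤ => s.1 (0, y))
    refine ⟨x - y, ?_, sub_ne_zero_of_ne hxy⟩
    have : ((0 : ℤ), x) - (0, y) ∈ s.lat := (s.eq_iff_sub_mem).1 hf
    simpa using this
  -- the subgroup A of horizontal projections
  obtain ⟨a, ha, hA⟩ : ∃ g : ℕ, 0 < g ∧ ∀ x : ℤ, (∃ y, (x, y) ∈ s.lat) ↔ (g : ℤ) ∣ x := by
    have hnt : ∃ x : ℤ, x ∈ s.lat.map (AddMonoidHom.fst ℤ ℤ) ∧ x ≠ 0 := by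
      obtain ⟨x, y, hxy, hf⟩ :=
        Finite.exists_ne_map_eq_of_infinite (fun x : ℤ => s.1 (x, 0))
      refine ⟨x - y, AddSubgroup.mem_map.2 ⟨((x : ℤ), 0) - (y, 0),
        (s.eq_iff_sub_mem).1 hf, by simp⟩, sub_ne_zero_of_ne hxy⟩
    obtain ⟨g, hg, hmem⟩ := int_subgroup (s.lat.map (AddMonoidHom.fst ℤ ℤ)) hnt
    refine ⟨g, hg, fun x => ?_⟩
    rw [← hmem, AddSubgroup.mem_map]
    constructor
    · rintro ⟨y, hy⟩
      exact ⟨(x, y), hy, rfl⟩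
    · rintro ⟨⟨x', y⟩, hy, rfl⟩
      exact ⟨y, hy⟩
  -- choose b0
  obtain ⟨y0, hy0⟩ : ∃ y, ((a : ℤ), y) ∈ s.lat := (hA a).2 dvd_rfl
  have hd0 : ((0 : ℤ), (d : ℤ)) ∈ s.lat := (hD d).2 dvd_rfl
  set b0 := y0 % (d : ℤ) with hb0def
  have hdz : (0 : ℤ) < (d : ℤ) := by exact_mod_cast hd
  have haz : (0 : ℤ) < (a : ℤ) := by exact_mod_cast ha
  have hb0mem : ((a : ℤ), b0) ∈ s.lat := by
    have h2 : (((a : ℤ), y0) - (y0 / d) • ((0 : ℤ), (d : ℤ))) ∈ s.lat :=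
      AddSubgroup.sub_mem _ hy0 (AddSubgroup.zsmul_mem _ hd0 _)
    have : (((a : ℤ), y0) - (y0 / d) • ((0 : ℤ), (d : ℤ))) = ((a : ℤ), b0) := by
      rw [Prod.ext_iff]
      constructor
      · simp
      · simp [hb0def, Int.emod_def, mul_comm]
    rwa [this] at h2
  refine ⟨a, d, b0, ha, hd, Int.emod_nonneg _ (ne_of_gt hdz), Int.emod_lt_of_pos _ hdz, ?_⟩
  intro v
  constructor
  · intro hv
    have hdvd : (a : ℤ) ∣ v.1 := (hA v.1).1 ⟨v.2, by rwa [Prod.mk.eta]⟩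
    refine ⟨hdvd, ?_⟩
    have hmul : v.1 / a * (a : ℤ) = v.1 := Int.ediv_mul_cancel hdvd
    have h2 : v - (v.1 / a) • (((a : ℤ), b0)) ∈ s.lat :=
      AddSubgroup.sub_mem _ hv (AddSubgroup.zsmul_mem _ hb0mem _)
    have he : v - (v.1 / a) • (((a : ℤ), b0)) = ((0 : ℤ), v.2 - v.1 / a * b0) := by
      rw [Prod.ext_iff]
      constructor
      · simp [hmul]
      · simp
    rw [he] at h2
    exact (hD _).1 h2
  · rintro ⟨h1, h2⟩
    have hmul : v.1 / a * (a : ℤ) = v.1 := Int.ediv_mul_cancel h1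
    have hm1 : (v.1 / a) • (((a : ℤ), b0)) ∈ s.lat := AddSubgroup.zsmul_mem _ hb0mem _
    have hm2 : ((0 : ℤ), v.2 - v.1 / a * b0) ∈ s.lat := (hD _).2 h2
    have := AddSubgroup.add_mem _ hm1 hm2
    have he : (v.1 / a) • (((a : ℤ), b0)) + ((0 : ℤ), v.2 - v.1 / a * b0) = v := by
      rw [Prod.ext_iff]
      constructor
      · simp [hmul]
      · simp
    rwa [he] at this

end SS

/-! ### Reduction into `Fin a × Fin d` -/

section FinRed

lemma emod_nonneg' {a : ℕ} (ha : 0 < a) (x : ℤ) : 0 ≤ x % (a : ℤ) :=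
  Int.emod_nonneg _ (by exact_mod_cast ha.ne')

lemma emod_lt' {a : ℕ} (ha : 0 < a) (x : ℤ) : x % (a : ℤ) < (a : ℤ) :=
  Int.emod_lt_of_pos _ (by exact_mod_cast ha)

def finRed {a d : ℕ} (ha : 0 < a) (hd : 0 < d) (b0 : ℤ) (v : ℤ × ℤ) : Fin a × Fin d :=
  (⟨((red a d b0 v).1).toNat, by
      have h1 := emod_nonneg' ha v.1
      have h2 := emod_lt' ha v.1
      simp only [red]
      omega⟩,
   ⟨((red a d b0 v).2).toNat, by
      have h1 := emod_nonneg' hd (v.2 - v.1 / a * b0)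
      have h2 := emod_lt' hd (v.2 - v.1 / a * b0)
      simp only [red]
      omega⟩)

lemma finRed_eq_iff {a d : ℕ} (ha : 0 < a) (hd : 0 < d) (b0 : ℤ) (v w : ℤ × ℤ) :
    finRed ha hd b0 v = finRed ha hd b0 w ↔ red a d b0 v = red a d b0 w := by
  have h1 := emod_nonneg' ha v.1
  have h2 := emod_nonneg' ha w.1
  have h3 := emod_nonneg' hd (v.2 - v.1 / a * b0)
  have h4 := emod_nonneg' hd (w.2 - w.1 / a * b0)
  rw [Prod.ext_iff, Prod.ext_iff, Fin.ext_iff, Fin.ext_iff]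
  simp only [finRed, red] at *
  constructor
  · rintro ⟨e1, e2⟩
    exact ⟨by omega, by omega⟩
  · rintro ⟨e1, e2⟩
    exact ⟨by omega, by omega⟩

lemma finRed_self {a d : ℕ} (ha : 0 < a) (hd : 0 < d) (b0 : ℤ) (i : Fin a) (j : Fin d) :
    finRed ha hd b0 ((i : ℤ), (j : ℤ)) = (i, j) := by
  have hr : red a d b0 ((i : ℤ), (j : ℤ)) = ((i : ℤ), (j : ℤ)) :=
    red_eq_self (by exact_mod_cast ha) (by exact_mod_cast hd) (by positivity)
      (by simpa using i.2) (by positivity) (by simpa using j.2)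
  rw [Prod.ext_iff, Fin.ext_iff, Fin.ext_iff]
  simp only [finRed, hr]
  constructor <;> simp

lemma finRed_zero {a d : ℕ} (ha : 0 < a) (hd : 0 < d) (b0 : ℤ) :
    finRed ha hd b0 0 = (⟨0, ha⟩, ⟨0, hd⟩) := by
  rw [Prod.ext_iff, Fin.ext_iff, Fin.ext_iff]
  simp only [finRed, red_zero]
  constructor <;> simp

end FinRed

/-! ### The parameter space `TT` -/

variable (n) in
def TT : Type :=
  Σ _p : {p : ℕ × ℕ // p ∈ n.divisorsAntidiagonal},
    Fin _p.1.2 × {F : Fin _p.1.1 × Fin _p.1.2 ≃ Fin n //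
      ∀ x, F x = 0 ↔ (x.1 : ℕ) = 0 ∧ (x.2 : ℕ) = 0}

lemma TT.ha (t : TT n) : 0 < t.1.1.1 :=
  Nat.pos_of_ne_zero (Nat.left_ne_zero_of_mem_divisorsAntidiagonal t.1.2)

lemma TT.hd (t : TT n) : 0 < t.1.1.2 :=
  Nat.pos_of_ne_zero (Nat.right_ne_zero_of_mem_divisorsAntidiagonal t.1.2)

def Phi (t : TT n) : SS n :=
  ⟨fun v => t.2.2.1 (finRed t.ha t.hd (t.2.1 : ℤ) v), by
    rw [t.2.2.2]
    rw [finRed_zero]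
    exact ⟨rfl, rfl⟩, by
    intro z
    refine ⟨(((t.2.2.1.symm z).1 : ℤ), ((t.2.2.1.symm z).2 : ℤ)), ?_⟩
    simp [finRed_self], by
    intro v w h u
    simp only at h ⊢
    have h2 : finRed t.ha t.hd (t.2.1 : ℤ) v = finRed t.ha t.hd (t.2.1 : ℤ) w :=
      t.2.2.1.injective h
    rw [finRed_eq_iff] at h2
    have h3 := red_add (by exact_mod_cast t.ha) h2 u
    rw [← finRed_eq_iff t.ha t.hd] at h3
    rw [h3]⟩

lemma Phi_eq_zero_iff (t : TT n) (v : ℤ × ℤ) :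
    (Phi t).1 v = 0 ↔
      ((t.1.1.1 : ℤ) ∣ v.1 ∧ (t.1.1.2 : ℤ) ∣ v.2 - v.1 / (t.1.1.1 : ℤ) * (t.2.1 : ℤ)) := by
  have haz : (0 : ℤ) < (t.1.1.1 : ℤ) := by exact_mod_cast t.ha
  show t.2.2.1 (finRed t.ha t.hd (t.2.1 : ℤ) v) = 0 ↔ _
  rw [t.2.2.2]
  have : ((finRed t.ha t.hd (t.2.1 : ℤ) v).1 : ℕ) = 0 ∧
      ((finRed t.ha t.hd (t.2.1 : ℤ) v).2 : ℕ) = 0 ↔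
      finRed t.ha t.hd (t.2.1 : ℤ) v = finRed t.ha t.hd (t.2.1 : ℤ) 0 := by
    rw [finRed_zero]
    rw [Prod.ext_iff, Fin.ext_iff, Fin.ext_iff]
  rw [this, finRed_eq_iff, red_eq_red_iff haz]
  simp

lemma Phi_horiz (t : TT n) (x : ℤ) :
    (∃ y, (Phi t).1 (x, y) = 0) ↔ (t.1.1.1 : ℤ) ∣ x := by
  constructor
  · rintro ⟨y, hy⟩
    exact ((Phi_eq_zero_iff t _).1 hy).1
  · intro hx
    refine ⟨x / (t.1.1.1 : ℤ) * (t.2.1 : ℤ), ?_⟩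
    rw [Phi_eq_zero_iff]
    exact ⟨hx, by simp⟩

lemma Phi_vert (t : TT n) (y : ℤ) :
    (Phi t).1 (0, y) = 0 ↔ (t.1.1.2 : ℤ) ∣ y := by
  rw [Phi_eq_zero_iff]
  simp

lemma Phi_b0 (t : TT n) (y : ℤ) :
    (Phi t).1 ((t.1.1.1 : ℤ), y) = 0 ↔ (t.1.1.2 : ℤ) ∣ y - (t.2.1 : ℤ) := by
  have haz : (t.1.1.1 : ℤ) ≠ 0 := by exact_mod_cast t.ha.ne'
  rw [Phi_eq_zero_iff]
  simp [Int.ediv_self, haz]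
  rw [Int.ediv_self haz, one_mul]

lemma Phi_injective : Injective (Phi (n := n)) := by
  intro t t' h
  have hfun : (Phi t).1 = (Phi t').1 := by rw [h]
  -- a = a'
  have hA : ∀ x : ℤ, (t.1.1.1 : ℤ) ∣ x ↔ (t'.1.1.1 : ℤ) ∣ x := by
    intro x
    rw [← Phi_horiz, ← Phi_horiz, hfun]
  have ha : t.1.1.1 = t'.1.1.1 := by
    have h1 : (t.1.1.1 : ℤ) ∣ (t'.1.1.1 : ℤ) := (hA _).2 dvd_rfl
    have h2 : (t'.1.1.1 : ℤ) ∣ (t.1.1.1 : ℤ) := (hA _).1 dvd_rfl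
    exact Nat.dvd_antisymm (by exact_mod_cast h1) (by exact_mod_cast h2)
  have hD : ∀ y : ℤ, (t.1.1.2 : ℤ) ∣ y ↔ (t'.1.1.2 : ℤ) ∣ y := by
    intro y
    rw [← Phi_vert, ← Phi_vert, hfun]
  have hd : t.1.1.2 = t'.1.1.2 := by
    have h1 : (t.1.1.2 : ℤ) ∣ (t'.1.1.2 : ℤ) := (hD _).2 dvd_rfl
    have h2 : (t'.1.1.2 : ℤ) ∣ (t.1.1.2 : ℤ) := (hD _).1 dvd_rfl
    exact Nat.dvd_antisymm (by exact_mod_cast h1) (by exact_mod_cast h2)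
  -- now destructure
  obtain ⟨⟨⟨a1, d1⟩, hm⟩, b, F, hF⟩ := t
  obtain ⟨⟨⟨a2, d2⟩, hm'⟩, b', F', hF'⟩ := t'
  simp only at ha hd hfun hA hD
  subst ha hd
  -- b = b'
  have hb : b = b' := by
    have h1 : (Phi ⟨⟨⟨a1, d1⟩, hm'⟩, b', F', hF'⟩).1 ((a1 : ℤ), (b' : ℤ)) = 0 := by
      refine (Phi_b0 _ _).2 ?_
      simp
    rw [← hfun] at h1
    replace h1 := (Phi_b0 _ _).1 h1
    have hd1 : (0 : ℤ) < (d1 : ℤ) := by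
      exact_mod_cast (TT.hd (⟨⟨⟨a1, d1⟩, hm⟩, b, F, hF⟩ : TT n))
    have hbb : ((b' : ℤ) - (b : ℤ)) = 0 := by
      refine Int.eq_zero_of_abs_lt_dvd h1 ?_
      have hb2 : (b : ℕ) < d1 := b.2
      have hb2' : (b' : ℕ) < d1 := b'.2
      rw [abs_lt]
      constructor <;> [skip; skip] <;> push_cast <;> omega
    have : (b : ℕ) = (b' : ℕ) := by omega
    exact Fin.ext this
  subst hb
  -- F = F'
  have hFF : F = F' := by
    apply Equiv.ext
    rintro ⟨i, j⟩
    have h1 : (Phi ⟨⟨⟨a1, d1⟩, hm⟩, b, F, hF⟩).1 ((i : ℤ), (j : ℤ)) =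
        (Phi ⟨⟨⟨a1, d1⟩, hm'⟩, b, F', hF'⟩).1 ((i : ℤ), (j : ℤ)) := by rw [hfun]
    show F (i, j) = F' (i, j)
    simpa [Phi, finRed_self] using h1
  subst hFF
  rfl

lemma coe_finRed {a d : ℕ} (ha : 0 < a) (hd : 0 < d) (b0 : ℤ) (v : ℤ × ℤ) :
    ((((finRed ha hd b0 v).1 : ℕ) : ℤ), (((finRed ha hd b0 v).2 : ℕ) : ℤ))
      = red a d b0 v := by
  have h1 := emod_nonneg' ha v.1
  have h2 := emod_nonneg' hd (v.2 - v.1 / a * b0)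
  simp only [finRed, red] at *
  rw [Prod.ext_iff]
  constructor <;> simp <;> omega

lemma Phi_surjective : Surjective (Phi (n := n)) := by
  intro s
  obtain ⟨a, d, b0, ha, hd, hb0n, hb0d, hchar⟩ := s.exists_data
  have haz : (0 : ℤ) < (a : ℤ) := by exact_mod_cast ha
  have hdz : (0 : ℤ) < (d : ℤ) := by exact_mod_cast hd
  set G : Fin a × Fin d → Fin n := fun x => s.1 ((x.1 : ℤ), (x.2 : ℤ)) with hG
  -- s is invariant under reduction
  have hred : ∀ v : ℤ × ℤ, s.1 (red a d b0 v) = s.1 v := by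
    intro v
    rw [s.eq_iff_sub_mem, hchar]
    constructor
    · show (a : ℤ) ∣ v.1 % a - v.1
      have : v.1 % a - v.1 = -((a : ℤ) * (v.1 / a)) := by
        rw [Int.emod_def]; ring
      rw [this]
      exact (dvd_mul_right _ _).neg_right
    · show (d : ℤ) ∣ (red a d b0 v).2 - v.2 - (v.1 % a - v.1) / a * b0
      have h1 : v.1 % a - v.1 = (a : ℤ) * (-(v.1 / a)) := by
        rw [Int.emod_def]; ring
      have h2 : (v.1 % a - v.1) / a = -(v.1 / a) := by
        rw [h1, Int.mul_ediv_cancel_left _ haz.ne']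
      rw [h2]
      show (d : ℤ) ∣ (v.2 - v.1 / a * b0) % d - v.2 - -(v.1 / a) * b0
      have : (v.2 - v.1 / a * b0) % d - v.2 - -(v.1 / a) * b0 =
          -((d : ℤ) * ((v.2 - v.1 / a * b0) / d)) := by
        rw [Int.emod_def]; ring
      rw [this]
      exact (dvd_mul_right _ _).neg_right
  have hGinj : Injective G := by
    rintro ⟨x1, x2⟩ ⟨y1, y2⟩ hxy
    simp only [hG] at hxy
    rw [s.eq_iff_sub_mem] at hxy
    have hsub : (((x1 : ℤ), (x2 : ℤ)) - ((y1 : ℤ), (y2 : ℤ)) : ℤ × ℤ) =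
        ((x1 : ℤ) - y1, (x2 : ℤ) - y2) := rfl
    rw [hsub, hchar] at hxy
    obtain ⟨hx1, hx2⟩ := hxy
    have e1 : (x1 : ℤ) - y1 = 0 := by
      refine Int.eq_zero_of_abs_lt_dvd hx1 ?_
      have := x1.2; have := y1.2
      rw [abs_lt]
      constructor <;> push_cast <;> omega
    have e1' : x1 = y1 := by
      have : (x1 : ℕ) = (y1 : ℕ) := by omega
      exact Fin.ext this
    rw [e1, Int.zero_ediv, zero_mul, sub_zero] at hx2
    have e2 : (x2 : ℤ) - y2 = 0 := by
      refine Int.eq_zero_of_abs_lt_dvd hx2 ?_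
      have := x2.2; have := y2.2
      rw [abs_lt]
      constructor <;> push_cast <;> omega
    have e2' : x2 = y2 := by
      have : (x2 : ℕ) = (y2 : ℕ) := by omega
      exact Fin.ext this
    rw [e1', e2']
  have hGsurj : Surjective G := by
    intro z
    obtain ⟨v, hv⟩ := s.2.2.1 z
    refine ⟨finRed ha hd b0 v, ?_⟩
    show s.1 _ = z
    rw [coe_finRed, hred, hv]
  have had : a * d = n := by
    have := Fintype.card_congr (Equiv.ofBijective G ⟨hGinj, hGsurj⟩)
    simpa using this
  have hmem : (a, d) ∈ n.divisorsAntidiagonal :=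
    Nat.mem_divisorsAntidiagonal.2 ⟨had, NeZero.ne n⟩
  set x0 : Fin a × Fin d := (⟨0, ha⟩, ⟨0, hd⟩) with hx0
  have hG0 : G x0 = 0 := by
    show s.1 _ = 0
    have : (((0 : ℕ) : ℤ), ((0 : ℕ) : ℤ)) = (0 : ℤ × ℤ) := by simp
    rw [hx0]
    exact s.2.1
  have hFcond : ∀ x : Fin a × Fin d, Equiv.ofBijective G ⟨hGinj, hGsurj⟩ x = 0 ↔
      (x.1 : ℕ) = 0 ∧ (x.2 : ℕ) = 0 := by
    intro x
    rw [show (Equiv.ofBijective G ⟨hGinj, hGsurj⟩ x) = G x from rfl, ← hG0]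
    rw [hGinj.eq_iff]
    rw [Prod.ext_iff, Fin.ext_iff, Fin.ext_iff]
  refine ⟨⟨⟨(a, d), hmem⟩, ⟨b0.toNat, by show b0.toNat < d; omega⟩,
    Equiv.ofBijective G ⟨hGinj, hGsurj⟩,
    hFcond⟩, ?_⟩
  apply Subtype.ext
  funext v
  show Equiv.ofBijective G ⟨hGinj, hGsurj⟩ (finRed _ _ _ v) = s.1 v
  have hcast : ((((⟨b0.toNat, by omega⟩ : Fin d) : ℕ)) : ℤ) = b0 := by
    simp
    omega
  rw [show ∀ h1 h2 bb, finRed (a := a) (d := d) h1 h2 bb v = finRed ha hd bb v from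
    fun _ _ _ => rfl]
  rw [hcast]
  show G (finRed ha hd b0 v) = s.1 v
  rw [hG]
  show s.1 _ = s.1 v
  rw [coe_finRed, hred]

/-! ### From commuting transitive pairs to colorings -/

variable (n) in
def Pairs : Type := {pr : Equiv.Perm (Fin n) × Equiv.Perm (Fin n) //
    pr.1 * pr.2 = pr.2 * pr.1 ∧
    MulAction.IsPretransitive (Subgroup.closure {pr.1, pr.2}) (Fin n)}

lemma pair_mul (pr : Pairs n) (a b c d : ℤ) :
    pr.1.1 ^ a * pr.1.2 ^ b * (pr.1.1 ^ c * pr.1.2 ^ d) =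
      pr.1.1 ^ (a + c) * pr.1.2 ^ (b + d) := by
  have hc : Commute pr.1.1 pr.1.2 := pr.2.1
  have hswap : pr.1.2 ^ b * pr.1.1 ^ c = pr.1.1 ^ c * pr.1.2 ^ b :=
    (hc.symm.zpow_zpow b c).eq
  calc pr.1.1 ^ a * pr.1.2 ^ b * (pr.1.1 ^ c * pr.1.2 ^ d)
      = pr.1.1 ^ a * (pr.1.2 ^ b * pr.1.1 ^ c) * pr.1.2 ^ d := by
        simp [mul_assoc]
    _ = pr.1.1 ^ a * (pr.1.1 ^ c * pr.1.2 ^ b) * pr.1.2 ^ d := by rw [hswap]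
    _ = pr.1.1 ^ (a + c) * pr.1.2 ^ (b + d) := by
        rw [zpow_add, zpow_add]
        simp [mul_assoc]

lemma mem_closure_pair (pr : Pairs n) (g : Equiv.Perm (Fin n))
    (hg : g ∈ Subgroup.closure {pr.1.1, pr.1.2}) : ∃ a b : ℤ, g = pr.1.1 ^ a * pr.1.2 ^ b := by
  induction hg using Subgroup.closure_induction with
  | mem x hx =>
    rcases hx with hx | hx
    · exact ⟨1, 0, by simp [hx]⟩
    · exact ⟨0, 1, by simp [Set.mem_singleton_iff.mp hx]⟩
  | one => exact ⟨0, 0, by simp⟩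
  | mul x y _ _ hx hy =>
    obtain ⟨a, b, rfl⟩ := hx
    obtain ⟨c, d, rfl⟩ := hy
    exact ⟨a + c, b + d, pair_mul pr a b c d⟩
  | inv x _ hx =>
    obtain ⟨a, b, rfl⟩ := hx
    refine ⟨-a, -b, ?_⟩
    have := pair_mul pr (-a) (-b) a b
    simp only [neg_add_cancel, zpow_zero, mul_one] at this
    exact (eq_inv_of_mul_eq_one_left this).symm

noncomputable def Psi (pr : Pairs n) : SS n :=
  ⟨fun v => (pr.1.1 ^ v.1 * pr.1.2 ^ v.2) 0, by simp, by
    intro x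
    have := pr.2.2
    obtain ⟨g, hg⟩ := MulAction.exists_smul_eq (Subgroup.closure {pr.1.1, pr.1.2})
      (0 : Fin n) x
    obtain ⟨a, b, hab⟩ := mem_closure_pair pr g.1 g.2
    refine ⟨(a, b), ?_⟩
    show (pr.1.1 ^ a * pr.1.2 ^ b) 0 = x
    rw [← hab]
    rw [Subgroup.smul_def, Equiv.Perm.smul_def] at hg
    exact hg, by
    intro v w h u
    show (pr.1.1 ^ (v.1 + u.1) * pr.1.2 ^ (v.2 + u.2)) 0 =
      (pr.1.1 ^ (w.1 + u.1) * pr.1.2 ^ (w.2 + u.2)) 0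
    rw [add_comm v.1, add_comm v.2, add_comm w.1, add_comm w.2,
      ← pair_mul pr u.1 u.2 v.1 v.2, ← pair_mul pr u.1 u.2 w.1 w.2]
    simp only [Equiv.Perm.mul_apply] at h ⊢
    rw [h]⟩

lemma Psi_shift (pr : Pairs n) (v u : ℤ × ℤ) :
    (pr.1.1 ^ u.1 * pr.1.2 ^ u.2) ((Psi pr).1 v) = (Psi pr).1 (v + u) := by
  show (pr.1.1 ^ u.1 * pr.1.2 ^ u.2) ((pr.1.1 ^ v.1 * pr.1.2 ^ v.2) 0) =
    (pr.1.1 ^ (v.1 + u.1) * pr.1.2 ^ (v.2 + u.2)) 0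
  rw [show v.1 + u.1 = u.1 + v.1 from add_comm _ _, show v.2 + u.2 = u.2 + v.2 from
    add_comm _ _, ← pair_mul pr u.1 u.2 v.1 v.2]
  simp only [Equiv.Perm.mul_apply]

lemma Psi_injective : Injective (Psi (n := n)) := by
  intro pr pr' h
  have hfun : ∀ v, (Psi pr).1 v = (Psi pr').1 v := fun v => by rw [h]
  have hsurj : Surjective (Psi pr).1 := (Psi pr).2.2.1
  apply Subtype.ext
  have h1 : pr.1.1 = pr'.1.1 := by
    apply Equiv.ext
    intro x
    obtain ⟨v, rfl⟩ := hsurj x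
    have e1 := Psi_shift pr v (1, 0)
    have e2 := Psi_shift pr' v (1, 0)
    simp only [zpow_one, zpow_zero, mul_one] at e1 e2
    rw [e1, hfun, ← e2, hfun]
  have h2 : pr.1.2 = pr'.1.2 := by
    apply Equiv.ext
    intro x
    obtain ⟨v, rfl⟩ := hsurj x
    have e1 := Psi_shift pr v (0, 1)
    have e2 := Psi_shift pr' v (0, 1)
    simp only [zpow_one, zpow_zero, one_mul] at e1 e2
    rw [e1, hfun, ← e2, hfun]
  exact Prod.ext h1 h2

/-! ### Surjectivity of Psi -/

noncomputable section PsiSurj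

variable (s : SS n)

noncomputable def sec : Fin n → ℤ × ℤ := surjInv s.2.2.1

lemma sec_spec (x : Fin n) : s.1 (sec s x) = x := surjInv_eq s.2.2.1 x

lemma s_sec_add (v u : ℤ × ℤ) : s.1 (sec s (s.1 v) + u) = s.1 (v + u) :=
  s.2.2.2 _ _ (sec_spec s (s.1 v)) u

noncomputable def trans (u : ℤ × ℤ) : Equiv.Perm (Fin n) where
  toFun x := s.1 (sec s x + u)
  invFun x := s.1 (sec s x + (-u))
  left_inv := by
    intro x
    obtain ⟨v, rfl⟩ := s.2.2.1 x
    simp only [s_sec_add, add_neg_cancel_right]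
  right_inv := by
    intro x
    obtain ⟨v, rfl⟩ := s.2.2.1 x
    simp only [s_sec_add, neg_add_cancel_right]

lemma trans_apply (u v : ℤ × ℤ) : trans s u (s.1 v) = s.1 (v + u) := s_sec_add s v u

lemma trans_zpow (u : ℤ × ℤ) : ∀ (k : ℤ) (v : ℤ × ℤ),
    (trans s u ^ k) (s.1 v) = s.1 (v + k • u) := by
  have hstep : ∀ (k : ℤ) v, (trans s u ^ (k + 1)) (s.1 v) = (trans s u ^ k) (s.1 (v + u)) := by
    intro k v
    rw [zpow_add_one, Equiv.Perm.mul_apply, trans_apply]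
  have hstep' : ∀ (k : ℤ) v, (trans s u ^ (k - 1)) (s.1 v) = (trans s u ^ k) (s.1 (v + (-u))) := by
    intro k v
    rw [zpow_sub_one, Equiv.Perm.mul_apply]
    have : (trans s u)⁻¹ (s.1 (v + (-u) + u)) = s.1 (v + (-u)) := by
      rw [← trans_apply s u (v + -u)]
      exact Equiv.symm_apply_apply _ _
    rw [← this, add_assoc, neg_add_cancel, add_zero]
  intro k
  induction k using Int.induction_on with
  | zero => intro v; simp
  | succ k ih =>
    intro v
    rw [hstep, ih]
    congr 1
    push_cast
    rw [add_smul, one_smul]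
    abel
  | pred k ih =>
    intro v
    have : (-(k : ℤ) - 1) = (-(k : ℤ)) - 1 := by ring
    rw [this, hstep', ih]
    congr 1
    push_cast
    rw [sub_smul, one_smul]
    abel

lemma trans_comm (u u' : ℤ × ℤ) : trans s u * trans s u' = trans s u' * trans s u := by
  apply Equiv.ext
  intro x
  obtain ⟨v, rfl⟩ := s.2.2.1 x
  rw [Equiv.Perm.mul_apply, Equiv.Perm.mul_apply, trans_apply, trans_apply, trans_apply,
    trans_apply, add_assoc, add_assoc, add_comm u u']

noncomputable def PsiInv : Pairs n := by
  refine ⟨(trans s (1, 0), trans s (0, 1)), trans_comm s _ _, ?_⟩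
  constructor
  intro x y
  obtain ⟨v, rfl⟩ := s.2.2.1 x
  obtain ⟨w, rfl⟩ := s.2.2.1 y
  set π := trans s (1, 0)
  set ρ := trans s (0, 1)
  have hmem : π ^ (w.1 - v.1) * ρ ^ (w.2 - v.2) ∈ Subgroup.closure {π, ρ} := by
    apply Subgroup.mul_mem
    · exact Subgroup.zpow_mem _ (Subgroup.subset_closure (by simp)) _
    · exact Subgroup.zpow_mem _ (Subgroup.subset_closure (by simp)) _
  refine ⟨⟨π ^ (w.1 - v.1) * ρ ^ (w.2 - v.2), hmem⟩, ?_⟩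
  rw [Subgroup.smul_def, Equiv.Perm.smul_def, Equiv.Perm.mul_apply]
  rw [trans_zpow, trans_zpow]
  have hvw : v + (w.2 - v.2) • ((0 : ℤ), (1 : ℤ)) + (w.1 - v.1) • ((1 : ℤ), (0 : ℤ)) = w := by
    rw [Prod.ext_iff]
    constructor <;> simp
  rw [hvw]

lemma Psi_PsiInv : Psi (PsiInv s) = s := by
  apply Subtype.ext
  funext v
  show (trans s (1, 0) ^ v.1 * trans s (0, 1) ^ v.2) 0 = s.1 v
  rw [Equiv.Perm.mul_apply]
  have h0 : (0 : Fin n) = s.1 0 := s.2.1.symm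
  conv_lhs => rw [h0]
  rw [trans_zpow, trans_zpow]
  have hv : (0 : ℤ × ℤ) + v.2 • ((0 : ℤ), (1 : ℤ)) + v.1 • ((1 : ℤ), (0 : ℤ)) = v := by
    rw [Prod.ext_iff]
    constructor <;> simp
  rw [hv]

lemma Psi_surjective : Surjective (Psi (n := n)) := fun s => ⟨PsiInv s, Psi_PsiInv s⟩

end PsiSurj

/-! ### Counting TT -/

lemma card_perm_fix (m : ℕ) : Nat.card {P : Equiv.Perm (Fin (m + 1)) // P 0 = 0} =
    m.factorial := by
  have e : {P : Equiv.Perm (Fin (m + 1)) // P 0 = 0} ≃ Equiv.Perm (Fin m) :=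
    { toFun := fun P => (Equiv.Perm.decomposeFin P.1).2
      invFun := fun σ => ⟨Equiv.Perm.decomposeFin.symm (0, σ), by simp⟩
      left_inv := by
        intro P
        apply Subtype.ext
        have hP := Equiv.Perm.decomposeFin_symm_apply_zero
          (Equiv.Perm.decomposeFin P.1).1 (Equiv.Perm.decomposeFin P.1).2
        rw [Prod.mk.eta, Equiv.symm_apply_apply] at hP
        have h1 : (Equiv.Perm.decomposeFin P.1).1 = 0 := by rw [← hP]; exact P.2
        show Equiv.Perm.decomposeFin.symm (0, (Equiv.Perm.decomposeFin P.1).2) = P.1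
        have h2 : ((0 : Fin (m + 1)), (Equiv.Perm.decomposeFin P.1).2) =
            Equiv.Perm.decomposeFin P.1 := Prod.ext_iff.mpr ⟨h1.symm, rfl⟩
        rw [h2]
        exact Equiv.symm_apply_apply _ _
      right_inv := by
        intro σ
        simp }
  rw [Nat.card_congr e, Nat.card_eq_fintype_card, Fintype.card_perm, Fintype.card_fin]

lemma card_perm_fix' (N : ℕ) [NeZero N] :
    Nat.card {P : Equiv.Perm (Fin N) // P 0 = 0} = (N - 1).factorial := by
  obtain ⟨m, rfl⟩ : ∃ m, N = m + 1 :=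
    ⟨N - 1, (Nat.succ_pred_eq_of_pos (Nat.pos_of_ne_zero (NeZero.ne N))).symm⟩
  simpa using card_perm_fix m

noncomputable instance : Fintype (TT n) := by
  unfold TT
  infer_instance

lemma card_TT : Nat.card (TT n) = (n - 1).factorial * ArithmeticFunction.sigma 1 n := by
  obtain ⟨m, hm⟩ : ∃ m, n = m + 1 := ⟨n - 1, by have := Nat.pos_of_ne_zero (NeZero.ne n); omega⟩
  -- card of each fiber
  have hfiber : ∀ p : {p : ℕ × ℕ // p ∈ n.divisorsAntidiagonal},
      Nat.card (Fin p.1.2 × {F : Fin p.1.1 × Fin p.1.2 ≃ Fin n //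
        ∀ x, F x = 0 ↔ (x.1 : ℕ) = 0 ∧ (x.2 : ℕ) = 0}) = p.1.2 * m.factorial := by
    rintro ⟨⟨a, d⟩, hp⟩
    have ha : 0 < a := Nat.pos_of_ne_zero (Nat.left_ne_zero_of_mem_divisorsAntidiagonal hp)
    have hd : 0 < d := Nat.pos_of_ne_zero (Nat.right_ne_zero_of_mem_divisorsAntidiagonal hp)
    have had : a * d = n := (Nat.mem_divisorsAntidiagonal.1 hp).1
    rw [Nat.card_prod, Nat.card_eq_fintype_card, Fintype.card_fin]
    congr 1
    -- build the distinguished equiv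
    set e0 : Fin a × Fin d ≃ Fin n := (finProdFinEquiv).trans (finCongr had) with he0def
    have he0 : e0 (⟨0, ha⟩, ⟨0, hd⟩) = 0 := by
      apply Fin.ext
      simp [he0def, finProdFinEquiv]
    set x0 : Fin a × Fin d := (⟨0, ha⟩, ⟨0, hd⟩) with hx0
    have key : {F : Fin a × Fin d ≃ Fin n // ∀ x, F x = 0 ↔ (x.1 : ℕ) = 0 ∧ (x.2 : ℕ) = 0} ≃
        {P : Equiv.Perm (Fin n) // P 0 = 0} :=
      { toFun := fun F => ⟨e0.symm.trans F.1, by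
          have : e0.symm 0 = x0 := by rw [← he0, Equiv.symm_apply_apply]
          show F.1 (e0.symm 0) = 0
          rw [this, F.2]
          exact ⟨rfl, rfl⟩⟩
        invFun := fun P => ⟨e0.trans P.1, by
          intro x
          show P.1 (e0 x) = 0 ↔ _
          constructor
          · intro hx
            have : e0 x = 0 := by
              have := P.1.injective (a₁ := e0 x) (a₂ := 0) (by rw [hx, P.2])
              exact this
            have hxx : x = x0 := e0.injective (by rw [this, he0])
            rw [hxx]
            exact ⟨rfl, rfl⟩
          · rintro ⟨h1, h2⟩
            have hxx : x = x0 := by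
              rw [hx0, Prod.ext_iff, Fin.ext_iff, Fin.ext_iff]
              exact ⟨h1, h2⟩
            rw [hxx, he0, P.2]⟩
        left_inv := by
          intro F
          apply Subtype.ext
          show e0.trans (e0.symm.trans F.1) = F.1
          rw [← Equiv.trans_assoc, Equiv.self_trans_symm, Equiv.refl_trans]
        right_inv := by
          intro P
          apply Subtype.ext
          show e0.symm.trans (e0.trans P.1) = P.1
          rw [← Equiv.trans_assoc, Equiv.symm_trans_self, Equiv.refl_trans] }
    rw [Nat.card_congr key, card_perm_fix' n, show n - 1 = m from by omega]
  -- sum up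
  rw [Nat.card_eq_fintype_card]
  show Fintype.card (Σ _p : {p : ℕ × ℕ // p ∈ n.divisorsAntidiagonal}, _) = _
  rw [Fintype.card_sigma]
  have : ∀ p : {p : ℕ × ℕ // p ∈ n.divisorsAntidiagonal},
      Fintype.card (Fin p.1.2 × {F : Fin p.1.1 × Fin p.1.2 ≃ Fin n //
        ∀ x, F x = 0 ↔ (x.1 : ℕ) = 0 ∧ (x.2 : ℕ) = 0}) = p.1.2 * m.factorial := by
    intro p
    rw [← Nat.card_eq_fintype_card]
    exact hfiber p
  rw [Finset.sum_congr rfl (fun p _ => this p)]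
  have h1 : (∑ p : {p : ℕ × ℕ // p ∈ n.divisorsAntidiagonal}, (p.1.2 * m.factorial))
      = ∑ p ∈ n.divisorsAntidiagonal, p.2 * m.factorial :=
    Finset.sum_coe_sort _ (fun p : ℕ × ℕ => p.2 * m.factorial)
  rw [h1]
  have h2 : (∑ p ∈ n.divisorsAntidiagonal, p.2 * m.factorial)
      = ∑ i ∈ n.divisors, i * m.factorial :=
    Nat.sum_divisorsAntidiagonal' (f := fun _ j => j * m.factorial)
  rw [h2, ArithmeticFunction.sigma_one_apply, ← Finset.sum_mul]
  have hms : m = n - 1 := by omega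
  rw [← hms, Nat.mul_comm]

end Stmt13

/-- the number of commuting pairs of permutations of {1,...,n}
generating a transitive subgroup equals (n-1)!·σ₁(n). -/
theorem stmt_13 (n : ℕ) (hn : 1 ≤ n) :
    Nat.card {pr : Equiv.Perm (Fin n) × Equiv.Perm (Fin n) //
        pr.1 * pr.2 = pr.2 * pr.1 ∧
        MulAction.IsPretransitive (Subgroup.closure {pr.1, pr.2}) (Fin n)} =
      (n - 1).factorial * ArithmeticFunction.sigma 1 n := by
  haveI : NeZero n := ⟨by omega⟩
  have h1 : Nat.card (Stmt13.Pairs n) = Nat.card (Stmt13.SS n) :=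
    Nat.card_eq_of_bijective _ ⟨Stmt13.Psi_injective, Stmt13.Psi_surjective⟩
  have h2 : Nat.card (Stmt13.TT n) = Nat.card (Stmt13.SS n) :=
    Nat.card_eq_of_bijective _ ⟨Stmt13.Phi_injective, Stmt13.Phi_surjective⟩
  show Nat.card (Stmt13.Pairs n) = _
  rw [h1, ← h2, Stmt13.card_TT]
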